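/- Consider the WARM triangle graph with α ≥ 4/3. There is no equilibrium (v_1, v_2, v_3) ∈ Δ_3 with v_1 ≥ v_2 > v_3 > 0; equivalently, every equilibrium with v_1 ≥ v_2 ≥ v_3 satisfies v_2 = v_3 or v_3 = 0. -/

import Mathlib

open Finset

noncomputable section

/-- Membership in the simplex `Δ`. -/
def InSimplex {ι : Type*} [Fintype ι] (v : ι → ℝ) : Prop :=
  (∀ i, 0 ≤ v i) ∧ ∑ i, v i = 1

/-- A WARM weight: a probability distribution on the subsets of the colour set,
giving no mass to the empty set. -/
def IsWarmWeight {ι : Type*} [Fintype ι] [DecidableEq ι] (p : Finset ι → ℝ) : Prop :=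
  p ∅ = 0 ∧ (∀ A, 0 ≤ p A ∧ p A ≤ 1) ∧ ∑ A : Finset ι, p A = 1

/-- The WARM vector field `F`. -/
def warmF {ι : Type*} [Fintype ι] [DecidableEq ι] (α : ℝ) (p : Finset ι → ℝ)
    (v : ι → ℝ) (i : ι) : ℝ :=
  -v i + ∑ A ∈ Finset.univ.filter (fun A : Finset ι => i ∈ A),
      p A * v i ^ α / (∑ j ∈ A, v j ^ α)

/-- The Jacobian matrix `D(v)`. -/
def warmD {ι : Type*} [Fintype ι] [DecidableEq ι] (α : ℝ) (p : Finset ι → ℝ)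
    (v : ι → ℝ) : Matrix ι ι ℝ :=
  Matrix.of fun i k =>
    if i = k then
      -1 + α * v i ^ (α - 1) *
        ∑ A ∈ Finset.univ.filter (fun A : Finset ι => i ∈ A),
          p A * ((∑ j ∈ A, v j ^ α) - v i ^ α) / (∑ j ∈ A, v j ^ α) ^ 2
    else
      -(α * v k ^ (α - 1) * v i ^ α *
        ∑ A ∈ Finset.univ.filter (fun A : Finset ι => i ∈ A ∧ k ∈ A),
          p A / (∑ j ∈ A, v j ^ α) ^ 2)

/-- `μ ∈ ℂ` is an eigenvalue of the real matrix `M`, i.e. a root of its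
characteristic polynomial. -/
def IsEigenvalue {ι : Type*} [Fintype ι] [DecidableEq ι] (M : Matrix ι ι ℝ) (μ : ℂ) : Prop :=
  (M.charpoly.map (algebraMap ℝ ℂ)).IsRoot μ

/-- Linear stability: every complex eigenvalue has negative real part. -/
def LinStable {ι : Type*} [Fintype ι] [DecidableEq ι] (M : Matrix ι ι ℝ) : Prop :=
  ∀ μ : ℂ, IsEigenvalue M μ → μ.re < 0

/-- Linear instability: some eigenvalue has positive real part. -/
def LinUnstable {ι : Type*} [Fintype ι] [DecidableEq ι] (M : Matrix ι ι ℝ) : Prop :=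
  ∃ μ : ℂ, IsEigenvalue M μ ∧ 0 < μ.re

/-- Critical: neither linearly stable nor linearly unstable. -/
def CriticalPt {ι : Type*} [Fintype ι] [DecidableEq ι] (M : Matrix ι ι ℝ) : Prop :=
  ¬ LinStable M ∧ ¬ LinUnstable M


/-- The WARM triangle graph weight: each of the three two-element subsets of `[3]` gets
mass `1/3`. -/
def ptri : Finset (Fin 3) → ℝ := fun A => if A.card = 2 then 1 / 3 else 0

section AuxTriangle
open Real Set

private lemma amgm (α r : ℝ) (hα : 1 < α) (hr : 0 < r) :
    2*α - 1 ≤ α * r^(α-1) + (α-1) * r^(-α) := by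
  have hs : (0:ℝ) < 2*α - 1 := by linarith
  have h := Real.geom_mean_le_arith_mean2_weighted
    (w₁ := α/(2*α-1)) (w₂ := (α-1)/(2*α-1)) (p₁ := r^(α-1)) (p₂ := r^(-α))
    (div_nonneg (by linarith) hs.le) (div_nonneg (by linarith) hs.le)
    (Real.rpow_nonneg hr.le _) (Real.rpow_nonneg hr.le _)
    (by rw [← add_div, div_eq_one_iff_eq hs.ne']; ring)
  have key : (r^(α-1)) ^ (α/(2*α-1)) * (r^(-α)) ^ ((α-1)/(2*α-1)) = 1 := by
    rw [← Real.rpow_mul hr.le, ← Real.rpow_mul hr.le, ← Real.rpow_add hr]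
    rw [show (α-1) * (α/(2*α-1)) + (-α) * ((α-1)/(2*α-1)) = 0 by field_simp; ring]
    exact Real.rpow_zero r
  rw [key] at h
  have h2 : (2*α-1) * 1 ≤ (2*α-1) * (α/(2*α-1) * r^(α-1) + (α-1)/(2*α-1) * r^(-α)) :=
    mul_le_mul_of_nonneg_left h hs.le
  calc 2*α-1 = (2*α-1) * 1 := by ring
    _ ≤ (2*α-1) * (α/(2*α-1) * r^(α-1) + (α-1)/(2*α-1) * r^(-α)) := h2
    _ = α * r^(α-1) + (α-1) * r^(-α) := by field_simp

private lemma key (α x y z : ℝ) (hα : 1 < α) (hz : 0 < z) (hzy : z < y) (hyx : y < x) :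
    (y^α - z^α) * (z^(1-α) - x^(1-α)) < (x^α - z^α) * (z^(1-α) - y^(1-α)) := by
  have hy : 0 < y := hz.trans hzy
  have hA : 0 < z^(1-α) - y^(1-α) :=
    sub_pos.2 (Real.rpow_lt_rpow_of_neg hz hzy (by linarith))
  have hB : 0 < y^α - z^α := sub_pos.2 (Real.rpow_lt_rpow hz.le hzy (by linarith))
  set g : ℝ → ℝ := fun s =>
    (s^α - z^α) * (z^(1-α) - y^(1-α)) - (y^α - z^α) * (z^(1-α) - s^(1-α)) with hg
  have hder : ∀ s, 0 < s → HasDerivAt g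
      (α * s^(α-1) * (z^(1-α) - y^(1-α)) - (y^α - z^α) * ((α-1) * s^(-α))) s := by
    intro s hs
    have h1 : HasDerivAt (fun u : ℝ => u ^ α) (α * s^(α-1)) s :=
      Real.hasDerivAt_rpow_const (Or.inl hs.ne')
    have h2 : HasDerivAt (fun u : ℝ => u ^ (1-α)) ((1-α) * s^(1-α-1)) s :=
      Real.hasDerivAt_rpow_const (Or.inl hs.ne')
    have := ((h1.sub_const (z^α)).mul_const (z^(1-α) - y^(1-α))).sub
      ((h2.const_sub (z^(1-α))).const_mul (y^α - z^α))
    refine this.congr_deriv ?_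
    rw [show (1-α-1) = -α by ring]; ring
  have hmono : StrictMonoOn g (Ici y) := by
    apply strictMonoOn_of_deriv_pos (convex_Ici y)
    · intro s hs
      exact (hder s (hy.trans_le hs)).continuousAt.continuousWithinAt
    · intro s hs
      rw [interior_Ici] at hs
      have hsy : y < s := hs
      have hs0 : 0 < s := hy.trans hsy
      rw [(hder s hs0).deriv]
      have t1 : (α * y^(α-1)) * (z^(1-α) - y^(1-α)) < (α * s^(α-1)) * (z^(1-α) - y^(1-α)) := by
        have h : y^(α-1) < s^(α-1) := Real.rpow_lt_rpow hy.le hsy (by linarith)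
        exact mul_lt_mul_of_pos_right (mul_lt_mul_of_pos_left h (by linarith)) hA
      have t2 : (y^α - z^α) * ((α-1) * s^(-α)) < (y^α - z^α) * ((α-1) * y^(-α)) := by
        have h : s^(-α) < y^(-α) := Real.rpow_lt_rpow_of_neg hy hsy (by linarith)
        exact mul_lt_mul_of_pos_left (mul_lt_mul_of_pos_left h (by linarith)) hB
      have eA : (y/z)^(α-1) = y^(α-1) * z^(1-α) := by
        rw [Real.div_rpow hy.le hz.le, show (1-α) = -(α-1) by ring, Real.rpow_neg hz.le,
          div_eq_mul_inv]
      have eB : (y/z)^(-α) = z^α * y^(-α) := by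
        rw [Real.div_rpow hy.le hz.le, Real.rpow_neg hy.le, Real.rpow_neg hz.le]
        rw [div_eq_mul_inv, inv_inv]
        ring
      have h := amgm α (y/z) hα (by positivity)
      rw [eA, eB] at h
      have e3 : α * (y^(α-1) * y^(1-α)) = α * 1 := by
        rw [← Real.rpow_add hy]; norm_num
      have e4 : (α-1) * (y^α * y^(-α)) = (α-1) * 1 := by
        rw [← Real.rpow_add hy]; norm_num
      nlinarith [t1, t2, h, e3, e4]
  have h0 : g y = 0 := by simp only [hg]; ring
  have hlt : g y < g x := hmono self_mem_Ici (mem_Ici.2 hyx.le) hyx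
  rw [h0] at hlt
  simp only [hg] at hlt
  linarith

private lemma final (α t : ℝ) (hα2 : 4/3 ≤ α) (ht : 1 < t) : 4*t - 1 < 3*t^α := by
  have ht0 : (0:ℝ) < t := by linarith
  set u : ℝ := t ^ ((1:ℝ)/3) with hu
  have hu1 : 1 < u := by
    rw [hu]
    exact Real.one_lt_rpow_iff_of_pos ht0 |>.2 (Or.inl ⟨ht, by norm_num⟩)
  have hu3 : u ^ (3:ℕ) = t := by
    rw [hu, ← Real.rpow_natCast (t ^ ((1:ℝ)/3)) 3, ← Real.rpow_mul ht0.le]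
    norm_num
  have hu4 : u ^ (4:ℕ) = t ^ ((4:ℝ)/3) := by
    rw [hu, ← Real.rpow_natCast (t ^ ((1:ℝ)/3)) 4, ← Real.rpow_mul ht0.le]
    norm_num
  have h1 : t ^ ((4:ℝ)/3) ≤ t ^ α := Real.rpow_le_rpow_of_exponent_le ht.le hα2
  have h2 : 4*(u^(3:ℕ)) - 1 < 3*(u^(4:ℕ)) := by nlinarith [sq_nonneg (u-1), sq_nonneg u, hu1]
  rw [hu3, hu4] at h2
  linarith

private lemma expand0 (α:ℝ) (v:Fin 3→ℝ) : warmF α ptri v 0 =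
    -v 0 + (1/3 * v 0^α/(v 0^α+v 1^α) + 1/3 * v 0^α/(v 0^α+v 2^α)) := by
  rw [warmF, show (Finset.univ.filter (fun A : Finset (Fin 3) => (0:Fin 3) ∈ A)) = {{0},{0,1},{0,2},{0,1,2}} from by decide]
  norm_num [ptri, Finset.sum_insert, Finset.mem_insert, Finset.sum_pair,
    (by decide : ({0}:Finset (Fin 3)) ≠ {0,1}), (by decide : ({0}:Finset (Fin 3)) ≠ {0,2}),
    (by decide : ({0}:Finset (Fin 3)) ≠ {0,1,2}), (by decide : ({0,1}:Finset (Fin 3)) ≠ {0,2}),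
    (by decide : ({0,1}:Finset (Fin 3)) ≠ {0,1,2}), (by decide : ({0,2}:Finset (Fin 3)) ≠ {0,1,2}),
    (by decide : (({0,1}:Finset (Fin 3))).card = 2), (by decide : (({0,2}:Finset (Fin 3))).card = 2),
    (by decide : (({0}:Finset (Fin 3))).card = 1), (by decide : (({0,1,2}:Finset (Fin 3))).card = 3),
    (by decide : (0:Fin 3) ≠ 1), (by decide : (0:Fin 3) ≠ 2), (by decide : (1:Fin 3) ≠ 2)]


private lemma expand1 (α:ℝ) (v:Fin 3→ℝ) : warmF α ptri v 1 =
    -v 1 + (1/3 * v 1^α/(v 0^α+v 1^α) + 1/3 * v 1^α/(v 1^α+v 2^α)) := by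
  rw [warmF, show (Finset.univ.filter (fun A : Finset (Fin 3) => (1:Fin 3) ∈ A)) = {{1},{0,1},{1,2},{0,1,2}} from by decide]
  norm_num [ptri, Finset.sum_insert, Finset.mem_insert, Finset.sum_pair,
    (by decide : ({1}:Finset (Fin 3)) ≠ {0,1}), (by decide : ({1}:Finset (Fin 3)) ≠ {1,2}),
    (by decide : ({1}:Finset (Fin 3)) ≠ {0,1,2}), (by decide : ({0,1}:Finset (Fin 3)) ≠ {1,2}),
    (by decide : ({0,1}:Finset (Fin 3)) ≠ {0,1,2}), (by decide : ({1,2}:Finset (Fin 3)) ≠ {0,1,2}),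
    (by decide : (({0,1}:Finset (Fin 3))).card = 2), (by decide : (({1,2}:Finset (Fin 3))).card = 2),
    (by decide : (({1}:Finset (Fin 3))).card = 1), (by decide : (({0,1,2}:Finset (Fin 3))).card = 3),
    (by decide : (0:Fin 3) ≠ 1), (by decide : (0:Fin 3) ≠ 2), (by decide : (1:Fin 3) ≠ 2)]


private lemma expand2 (α:ℝ) (v:Fin 3→ℝ) : warmF α ptri v 2 =
    -v 2 + (1/3 * v 2^α/(v 0^α+v 2^α) + 1/3 * v 2^α/(v 1^α+v 2^α)) := by
  rw [warmF, show (Finset.univ.filter (fun A : Finset (Fin 3) => (2:Fin 3) ∈ A)) = {{2},{0,2},{1,2},{0,1,2}} from by decide]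
  norm_num [ptri, Finset.sum_insert, Finset.mem_insert, Finset.sum_pair,
    (by decide : ({2}:Finset (Fin 3)) ≠ {0,2}), (by decide : ({2}:Finset (Fin 3)) ≠ {1,2}),
    (by decide : ({2}:Finset (Fin 3)) ≠ {0,1,2}), (by decide : ({0,2}:Finset (Fin 3)) ≠ {1,2}),
    (by decide : ({0,2}:Finset (Fin 3)) ≠ {0,1,2}), (by decide : ({1,2}:Finset (Fin 3)) ≠ {0,1,2}),
    (by decide : (({0,2}:Finset (Fin 3))).card = 2), (by decide : (({1,2}:Finset (Fin 3))).card = 2),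
    (by decide : (({2}:Finset (Fin 3))).card = 1), (by decide : (({0,1,2}:Finset (Fin 3))).card = 3),
    (by decide : (0:Fin 3) ≠ 1), (by decide : (0:Fin 3) ≠ 2), (by decide : (1:Fin 3) ≠ 2)]

end AuxTriangle

/-- **Triangle graph, `α ≥ 4/3`.** There is no equilibrium with
`v₁ ≥ v₂ > v₃ > 0`: every equilibrium with `v₁ ≥ v₂ ≥ v₃` satisfies `v₂ = v₃` or
`v₃ = 0`. -/
theorem triangle_no_strict_middle_of_large_alpha (α : ℝ) (hα1 : 1 < α)
    (hα2 : 4 / 3 ≤ α)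
    (v : Fin 3 → ℝ) (hv : InSimplex v) (heq : ∀ i, warmF α ptri v i = 0)
    (h21 : v 1 ≤ v 0) (h32 : v 2 ≤ v 1) :
    v 1 = v 2 ∨ v 2 = 0 := by
  obtain ⟨hpos, hsum⟩ := hv
  rw [Fin.sum_univ_three] at hsum
  by_contra hcon
  push_neg at hcon
  obtain ⟨hne, hzne⟩ := hcon
  have hz : 0 < v 2 := (hpos 2).lt_of_ne (Ne.symm hzne)
  have hzy : v 2 < v 1 := lt_of_le_of_ne h32 (fun h => hne h.symm)
  have hy : 0 < v 1 := hz.trans hzy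
  have hx : 0 < v 0 := hy.trans_le h21
  have ha : 0 < v 0 ^ α := Real.rpow_pos_of_pos hx α
  have hb : 0 < v 1 ^ α := Real.rpow_pos_of_pos hy α
  have hc : 0 < v 2 ^ α := Real.rpow_pos_of_pos hz α
  have E0 : v 0 = 1/3 * v 0^α/(v 0^α+v 1^α) + 1/3 * v 0^α/(v 0^α+v 2^α) := by
    have := heq 0; rw [expand0] at this; linarith
  have E1 : v 1 = 1/3 * v 1^α/(v 0^α+v 1^α) + 1/3 * v 1^α/(v 1^α+v 2^α) := by
    have := heq 1; rw [expand1] at this; linarith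
  have E2 : v 2 = 1/3 * v 2^α/(v 0^α+v 2^α) + 1/3 * v 2^α/(v 1^α+v 2^α) := by
    have := heq 2; rw [expand2] at this; linarith
  rcases eq_or_lt_of_le h21 with hxy | hxy
  · -- v 1 = v 0
    rw [← hxy] at E2 hsum
    set t : ℝ := v 1 / v 2 with htdef
    have ht : 1 < t := (one_lt_div hz).2 hzy
    have htz : v 1 = t * v 2 := (div_mul_cancel₀ (v 1) hz.ne').symm
    have hpow : v 1 ^ α = t^α * v 2^α := by
      rw [htz, Real.mul_rpow (by positivity) hz.le]
    rw [hpow] at E2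
    have e1 : 3 * v 2 * (t^α + 1) = 2 := by
      have htc : 0 < t ^ α := Real.rpow_pos_of_pos (by linarith) α
      have h2 : 0 < t^α * v 2^α + v 2^α := by positivity
      field_simp at E2
      linear_combination E2
    have e2 : (2*t+1) * v 2 = 1 := by linear_combination hsum - 2*htz
    have hteq : 3*t^α = 4*t - 1 := by
      linear_combination (2*t+1)*e1 - 3*(t^α+1)*e2
    have := final α t hα2 ht
    linarith
  · -- v 1 < v 0
    have hab : 0 < v 0^α + v 1^α := by positivity
    have hac : 0 < v 0^α + v 2^α := by positivity
    have hbc : 0 < v 1^α + v 2^α := by positivity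
    have R0 : v 0^(1-α) * v 0^α = v 0 := by
      rw [← Real.rpow_add hx]; norm_num
    have R1 : v 1^(1-α) * v 1^α = v 1 := by
      rw [← Real.rpow_add hy]; norm_num
    have R2 : v 2^(1-α) * v 2^α = v 2 := by
      rw [← Real.rpow_add hz]; norm_num
    have f0 : 3 * v 0^(1-α) = 1/(v 0^α+v 1^α) + 1/(v 0^α+v 2^α) := by
      have h := R0.trans E0
      field_simp at h ⊢
      linear_combination h
    have f1 : 3 * v 1^(1-α) = 1/(v 0^α+v 1^α) + 1/(v 1^α+v 2^α) := by
      have h := R1.trans E1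
      field_simp at h ⊢
      linear_combination h
    have f2 : 3 * v 2^(1-α) = 1/(v 0^α+v 2^α) + 1/(v 1^α+v 2^α) := by
      have h := R2.trans E2
      field_simp at h ⊢
      linear_combination h
    have TA : v 1^α - v 2^α =
        3*(v 2^(1-α) - v 1^(1-α)) * ((v 0^α+v 1^α)*(v 0^α+v 2^α)) := by
      field_simp at f1 f2
      apply mul_left_cancel₀ (ne_of_gt hbc)
      linear_combination (v 0^α+v 2^α)*f1 - (v 0^α+v 1^α)*f2
    have TB : v 0^α - v 2^α =
        3*(v 2^(1-α) - v 0^(1-α)) * ((v 0^α+v 1^α)*(v 1^α+v 2^α)) := by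
      field_simp at f0 f2
      apply mul_left_cancel₀ (ne_of_gt hac)
      linear_combination (v 1^α+v 2^α)*f0 - (v 0^α+v 1^α)*f2
    have hk := key α (v 0) (v 1) (v 2) hα1 hz hzy hxy
    have hZY : 0 < v 2^(1-α) - v 1^(1-α) :=
      sub_pos.2 (Real.rpow_lt_rpow_of_neg hz hzy (by linarith))
    have hZX : 0 < v 2^(1-α) - v 0^(1-α) :=
      sub_pos.2 (Real.rpow_lt_rpow_of_neg hz (hzy.trans hxy) (by linarith))
    have hba : v 1^α < v 0^α := Real.rpow_lt_rpow hy.le hxy (by linarith)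
    rw [TA, TB] at hk
    have hsum1 : (v 0^α+v 1^α)*(v 1^α+v 2^α) < (v 0^α+v 1^α)*(v 0^α+v 2^α) :=
      mul_lt_mul_of_pos_left (by linarith) hab
    have h3X : (0:ℝ) < 3*(v 2^(1-α) - v 0^(1-α)) := by linarith
    have step1 := mul_lt_mul_of_pos_left hsum1 h3X
    have step2 := mul_lt_mul_of_pos_right step1 hZY
    have e : (3*(v 2^(1-α) - v 0^(1-α))*((v 0^α+v 1^α)*(v 0^α+v 2^α)))*(v 2^(1-α) - v 1^(1-α))
        = (3*(v 2^(1-α) - v 1^(1-α))*((v 0^α+v 1^α)*(v 0^α+v 2^α)))*(v 2^(1-α) - v 0^(1-α)) := by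
      ring
    rw [e] at step2
    exact absurd hk (lt_asymm step2)

end
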